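/- arXiv:2203.02368 — 2 statements merged into one kernel-verified Lean document; each statement's English description precedes it below -/
import Mathlib

section
/- Let C = {0,1}^ℕ and let E = ℝ^C carry the product topology. Then: (i) E is a tame locally convex space; (ii) the sequence (π_n), where π_n ∈ E is the n-th coordinate projection C → ℝ, is bounded in E and has no weak Cauchy subsequence, so E is not a Rosenthal lcs; (iii) the dense linear subspace Y ⊆ E consisting of all functions C → ℝ with finite support is a Rosenthal lcs. In particular, Rosenthal's dichotomy fails in E: the bounded sequence (π_n) has neither a weak Cauchy subsequence nor an l¹-subsequence. -/
open Filter Topology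

/-- A sequence of real-valued functions is (combinatorially) independent. -/
def IndepSeq {X : Type*} (f : ℕ → X → ℝ) : Prop :=
  ∃ a b : ℝ, a < b ∧ ∀ P M : Finset ℕ, Disjoint P M →
    ∃ x : X, (∀ n ∈ P, f n x < a) ∧ (∀ n ∈ M, b < f n x)

/-- A family of real-valued functions is tame if it contains no independent sequence. -/
def IsTameFamily {X : Type*} (F : Set (X → ℝ)) : Prop :=
  ¬ ∃ f : ℕ → X → ℝ, (∀ n, f n ∈ F) ∧ IndepSeq f

section Defs

variable {E : Type*} [AddCommGroup E] [Module ℝ E] [TopologicalSpace E]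

/-- A set of continuous functionals (with the weak-star topology) is equicontinuous. -/
def IsEquicontinuousSet (K : Set (WeakDual ℝ E)) : Prop :=
  ∀ ε : ℝ, 0 < ε → ∃ U ∈ nhds (0 : E), ∀ φ ∈ K, ∀ x ∈ U, |φ x| ≤ ε

/-- The family of functions on `K ⊆ E*` obtained by evaluating the elements of `B ⊆ E`. -/
def evalFamily (B : Set E) (K : Set (WeakDual ℝ E)) : Set (K → ℝ) :=
  {g | ∃ b ∈ B, g = fun φ : K => (φ : WeakDual ℝ E) b}

/-- `B` is a tame subset of `E`. -/
def IsTameSubset (B : Set E) : Prop :=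
  ∀ K : Set (WeakDual ℝ E), IsEquicontinuousSet K → IsCompact K →
    IsTameFamily (evalFamily B K)

/-- An `l¹`-sequence in a locally convex space. -/
def IsL1Seq (x : ℕ → E) : Prop :=
  ∃ ρ : Seminorm ℝ E, Continuous ρ ∧ ∃ δ : ℝ, 0 < δ ∧
    ∀ (n : ℕ) (c : ℕ → ℝ),
      δ * ∑ i ∈ Finset.range n, |c i| ≤ ρ (∑ i ∈ Finset.range n, c i • x i)

/-- A sequence is weak Cauchy if `(φ (x n))` converges for every continuous functional. -/
def IsWeakCauchy (x : ℕ → E) : Prop :=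
  ∀ φ : E →L[ℝ] ℝ, ∃ l : ℝ, Tendsto (fun n => φ (x n)) atTop (𝓝 l)

end Defs

/-- The Cantor cube `C = {0,1}^ℕ`. -/
abbrev CantorCube : Type := ℕ → Bool

/-- `E = ℝ^C` with the product topology. -/
abbrev BigProd : Type := CantorCube → ℝ

/-- The `n`-th coordinate projection `C → ℝ`, as an element of `E = ℝ^C`. -/
def proj (n : ℕ) : BigProd := fun α => if α n then (1 : ℝ) else 0

/-- The dense linear subspace of `ℝ^C` of all functions with finite support. -/
def finSuppSubmodule : Submodule ℝ BigProd where
  carrier := {f | (Function.support f).Finite}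
  zero_mem' := by simp [Function.support_zero]
  add_mem' := fun hf hg => (hf.union hg).subset (Function.support_add _ _)
  smul_mem' := fun c f hf => hf.subset (Function.support_const_smul_subset c f)

/-! ### Auxiliary lemmas -/

/-- Bolzano–Weierstrass for pointwise-bounded sequences over a countable index. -/
lemma exists_subseq_tendsto_pointwise {S : Type*} [Countable S] (z : ℕ → S → ℝ) (M : S → ℝ)
    (hz : ∀ n s, |z n s| ≤ M s) :
    ∃ ψ : ℕ → ℕ, StrictMono ψ ∧ ∃ w : S → ℝ,
      ∀ s, Tendsto (fun n => z (ψ n) s) atTop (𝓝 (w s)) := by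
  have hcpt : IsCompact (Set.pi Set.univ fun s : S => Set.Icc (-(M s)) (M s)) :=
    isCompact_univ_pi fun s => isCompact_Icc
  have hmem : ∀ n, z n ∈ Set.pi Set.univ fun s : S => Set.Icc (-(M s)) (M s) := by
    intro n s _
    exact abs_le.mp (hz n s)
  obtain ⟨w, -, ψ, hψ, hconv⟩ := hcpt.tendsto_subseq hmem
  refine ⟨ψ, hψ, w, fun s => ?_⟩
  exact (continuous_apply s).continuousAt.tendsto.comp hconv

/-- Every neighborhood of `0` in a product `ι → ℝ` contains a finite "box". -/
lemma exists_finset_box {ι : Type*} {U : Set (ι → ℝ)} (hU : U ∈ 𝓝 (0 : ι → ℝ)) :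
    ∃ (I : Finset ι) (δ : ℝ), 0 < δ ∧ ∀ x : ι → ℝ, (∀ α ∈ I, |x α| ≤ δ) → x ∈ U := by
  rw [nhds_pi, Filter.mem_pi] at hU
  obtain ⟨I, hIfin, t, ht, hsub⟩ := hU
  have : ∀ α : ι, ∃ ε : ℝ, 0 < ε ∧ ∀ y : ℝ, |y| ≤ ε → y ∈ t α := by
    intro α
    obtain ⟨ε, hε, hball⟩ := Metric.mem_nhds_iff.mp (ht α)
    refine ⟨ε / 2, by linarith, fun y hy => hball ?_⟩
    simp only [Metric.mem_ball, Real.dist_eq, Pi.zero_apply, sub_zero]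
    calc |y| ≤ ε / 2 := hy
      _ < ε := by linarith
  choose ε hεpos hε using this
  classical
  rcases hIfin.toFinset.eq_empty_or_nonempty with hemp | hne
  · refine ⟨∅, 1, one_pos, fun x _ => hsub fun α hα => ?_⟩
    exact absurd (hIfin.mem_toFinset.mpr hα) (by simp [hemp])
  · obtain ⟨β, hβ, hβmin⟩ := hIfin.toFinset.exists_min_image ε hne
    refine ⟨hIfin.toFinset, ε β, hεpos β, fun x hx => hsub fun α hα => ?_⟩
    have hα' : α ∈ hIfin.toFinset := hIfin.mem_toFinset.mpr hα
    exact hε α _ (le_trans (hx α hα') (hβmin α hα'))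

open Classical in
/-- The "standard basis" vector at `α`. -/
noncomputable def eBasis (α : CantorCube) : BigProd := fun β => if β = α then 1 else 0

lemma eBasis_mem (α : CantorCube) : eBasis α ∈ finSuppSubmodule := by
  show (Function.support (eBasis α)).Finite
  refine (Set.finite_singleton α).subset fun β hβ => ?_
  by_contra h
  simp only [Set.mem_singleton_iff] at h
  simp [eBasis, Function.mem_support, h] at hβ

lemma sum_eBasis_apply (I : Finset CantorCube) (x : BigProd) {β : CantorCube} (hβ : β ∈ I) :
    (∑ α ∈ I, x α • eBasis α) β = x β := by
  classical
  simp only [Finset.sum_apply, Pi.smul_apply, eBasis, smul_eq_mul, mul_ite, mul_one, mul_zero]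
  rw [Finset.sum_ite_eq I β x]
  simp [hβ]

/-- Any linear functional in the weak dual that kills vectors vanishing on `I` is a
finite linear combination of coordinate evaluations. -/
lemma weakdual_repr (φ : WeakDual ℝ BigProd) (I : Finset CantorCube)
    (hvan : ∀ x : BigProd, (∀ α ∈ I, x α = 0) → φ x = 0) (x : BigProd) :
    φ x = ∑ α ∈ I, x α * φ (eBasis α) := by
  have h1 : φ (x - ∑ α ∈ I, x α • eBasis α) = 0 := by
    refine hvan _ fun β hβ => ?_
    simp only [Pi.sub_apply]
    rw [sum_eBasis_apply I x hβ, sub_self]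
  have h2 : φ (∑ α ∈ I, x α • eBasis α) = ∑ α ∈ I, x α * φ (eBasis α) := by
    rw [map_sum]
    exact Finset.sum_congr rfl fun α _ => by rw [map_smul, smul_eq_mul]
  have h3 := map_sub φ x (∑ α ∈ I, x α • eBasis α)
  rw [h1, h2] at h3
  linarith [h3]

/-! ### Part (i) -/

lemma part_i : ∀ B : Set BigProd, Bornology.IsVonNBounded ℝ B → IsTameSubset B := by
  intro B hB K hKeq hKcpt
  rintro ⟨f, hf, a, b, hab, hind⟩
  classical
  choose v hvB hvf using hf
  obtain ⟨U, hU, hUbd⟩ := hKeq 1 one_pos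
  obtain ⟨I, ε, hεpos, hbox⟩ := exists_finset_box hU
  have hvan : ∀ φ ∈ K, ∀ x : BigProd, (∀ α ∈ I, x α = 0) → φ x = 0 := by
    intro φ hφ x hx
    by_contra h
    have key : ∀ c : ℝ, |φ (c • x)| ≤ 1 := fun c =>
      hUbd φ hφ _ (hbox _ fun α hα => by simp [hx α hα, hεpos.le])
    have h2 := key (2 / φ x)
    rw [map_smul, smul_eq_mul, abs_mul, abs_div] at h2
    have : |(2 : ℝ)| / |φ x| * |φ x| = 2 := by
      rw [div_mul_cancel₀]
      · simp
      · simpa using h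
    linarith [h2, this]
  have hM : ∀ α : CantorCube, ∃ Mα : ℝ, ∀ z ∈ B, |z α| ≤ Mα := by
    intro α
    have him := hB.image (ContinuousLinearMap.proj (R := ℝ) (φ := fun _ : CantorCube => ℝ) α)
    rw [NormedSpace.isVonNBounded_iff] at him
    obtain ⟨Mα, hMα⟩ := him.exists_norm_le
    exact ⟨Mα, fun z hz => hMα _ (Set.mem_image_of_mem _ hz)⟩
  choose M hMle using hM
  have hC : ∀ α : CantorCube, ∃ Cα : ℝ, 0 ≤ Cα ∧ ∀ φ ∈ K, |φ (eBasis α)| ≤ Cα := by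
    intro α
    have hcont : Continuous fun φ : WeakDual ℝ BigProd => φ (eBasis α) :=
      WeakDual.eval_continuous _
    obtain ⟨Cα, hCα⟩ := (hKcpt.image hcont).isBounded.exists_norm_le
    exact ⟨max Cα 0, le_max_right _ _, fun φ hφ =>
      le_trans (hCα _ (Set.mem_image_of_mem _ hφ)) (le_max_left _ _)⟩
  choose C hC0 hCle using hC
  obtain ⟨ψ, hψ, w, hw⟩ := exists_subseq_tendsto_pointwise
    (fun n (α : ↥I) => v n α.val) (fun α => M α.val) (fun n α => hMle _ _ (hvB n))
  set T : ℝ := ∑ α ∈ I, C α with hTdef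
  have hT : 0 ≤ T := Finset.sum_nonneg fun α _ => hC0 α
  set ε0 : ℝ := (b - a) / (T + 1) with hε0def
  have hε0 : 0 < ε0 := div_pos (by linarith) (by linarith)
  have hev : ∀ᶠ n in atTop, ∀ α : ↥I, |v (ψ n) α.val - w α| < ε0 / 2 := by
    rw [eventually_all]
    intro α
    have := Metric.tendsto_atTop.mp (hw α) (ε0 / 2) (by linarith)
    obtain ⟨N, hN⟩ := this
    exact eventually_atTop.mpr ⟨N, fun n hn => by simpa [Real.dist_eq] using hN n hn⟩
  obtain ⟨N, hN⟩ := eventually_atTop.mp hev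
  have hne : ψ N ≠ ψ (N + 1) := fun h => by
    have := hψ.injective h; omega
  obtain ⟨x, hxa, hxb⟩ := hind {ψ N} {ψ (N + 1)} (Finset.disjoint_singleton.mpr hne)
  have hxa' : f (ψ N) x < a := hxa _ (Finset.mem_singleton_self _)
  have hxb' : b < f (ψ (N + 1)) x := hxb _ (Finset.mem_singleton_self _)
  have hrepr : ∀ n, f n x = ∑ α ∈ I, v n α * (x : WeakDual ℝ BigProd) (eBasis α) := by
    intro n
    have h1 : f n x = (x : WeakDual ℝ BigProd) (v n) := by rw [hvf n]
    rw [h1]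
    exact weakdual_repr _ I (hvan _ x.2) (v n)
  have hdiff : f (ψ (N + 1)) x - f (ψ N) x ≤ ∑ α ∈ I, ε0 * C α := by
    rw [hrepr, hrepr, ← Finset.sum_sub_distrib]
    refine le_trans (Finset.sum_le_sum fun α hα => ?_)
      (le_refl (∑ α ∈ I, ε0 * C α))
    rw [← sub_mul]
    have hd : |v (ψ (N + 1)) α - v (ψ N) α| ≤ ε0 := by
      have h1 := hN N le_rfl ⟨α, hα⟩
      have h2 := hN (N + 1) (by omega) ⟨α, hα⟩
      calc |v (ψ (N + 1)) α - v (ψ N) α|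
          = |(v (ψ (N + 1)) α - w ⟨α, hα⟩) - (v (ψ N) α - w ⟨α, hα⟩)| := by ring_nf
        _ ≤ |v (ψ (N + 1)) α - w ⟨α, hα⟩| + |v (ψ N) α - w ⟨α, hα⟩| := abs_sub _ _
        _ ≤ ε0 := by linarith
    calc (v (ψ (N + 1)) α - v (ψ N) α) * (x : WeakDual ℝ BigProd) (eBasis α)
        ≤ |(v (ψ (N + 1)) α - v (ψ N) α) * (x : WeakDual ℝ BigProd) (eBasis α)| := le_abs_self _
      _ = |v (ψ (N + 1)) α - v (ψ N) α| * |(x : WeakDual ℝ BigProd) (eBasis α)| := abs_mul _ _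
      _ ≤ ε0 * C α := mul_le_mul hd (hCle α _ x.2) (abs_nonneg _) hε0.le
  have hsum : ∑ α ∈ I, ε0 * C α = ε0 * T := by rw [← Finset.mul_sum]
  have hlt : ε0 * T < b - a := by
    have : ε0 * (T + 1) = b - a := by
      rw [hε0def]; field_simp
    nlinarith
  rw [hsum] at hdiff
  linarith

/-! ### Part (ii) -/

lemma part_ii_bdd : Bornology.IsVonNBounded ℝ (Set.range proj) := by
  rw [Bornology.isVonNBounded_pi_iff]
  intro α
  refine (NormedSpace.isVonNBounded_closedBall ℝ ℝ 1).subset ?_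
  rintro _ ⟨_, ⟨n, rfl⟩, rfl⟩
  simp only [Function.eval, proj, Metric.mem_closedBall, Real.dist_eq, sub_zero]
  split <;> norm_num

lemma part_ii_nc : ¬ ∃ ψ : ℕ → ℕ, StrictMono ψ ∧ IsWeakCauchy (proj ∘ ψ) := by
  rintro ⟨ψ, hψ, hwc⟩
  classical
  set α0 : CantorCube := fun k => decide (∃ m, k = ψ (2 * m)) with hα0
  obtain ⟨l, hl⟩ := hwc (ContinuousLinearMap.proj α0)
  simp only [Function.comp_apply, ContinuousLinearMap.proj_apply] at hl
  have heven : ∀ m, proj (ψ (2 * m)) α0 = 1 := by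
    intro m
    have hα : α0 (ψ (2 * m)) = true := decide_eq_true ⟨m, rfl⟩
    simp [proj, hα]
  have hodd : ∀ m, proj (ψ (2 * m + 1)) α0 = 0 := by
    intro m
    have hα : α0 (ψ (2 * m + 1)) = false := by
      rw [hα0, decide_eq_false_iff_not]
      rintro ⟨m', hm'⟩
      have := hψ.injective hm'
      omega
    simp [proj, hα]
  have h2m : Tendsto (fun m : ℕ => 2 * m) atTop atTop :=
    tendsto_atTop_mono (fun m => by simp only [id_eq]; omega) tendsto_id
  have h2m1 : Tendsto (fun m : ℕ => 2 * m + 1) atTop atTop :=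
    tendsto_atTop_mono (fun m => by simp only [id_eq]; omega) tendsto_id
  have t1 : Tendsto (fun m => proj (ψ (2 * m)) α0) atTop (𝓝 l) := hl.comp h2m
  have t2 : Tendsto (fun m => proj (ψ (2 * m + 1)) α0) atTop (𝓝 l) := hl.comp h2m1
  rw [funext heven] at t1
  rw [funext hodd] at t2
  have e1 : l = 1 := tendsto_nhds_unique t1 tendsto_const_nhds
  have e2 : l = 0 := tendsto_nhds_unique t2 tendsto_const_nhds
  rw [e1] at e2
  norm_num at e2

/-! ### Part (iii) -/

lemma part_iii_dense : Dense (finSuppSubmodule : Set BigProd) := by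
  intro f
  rw [mem_closure_iff_nhds]
  intro U hU
  rw [nhds_pi, Filter.mem_pi] at hU
  obtain ⟨I, hIfin, t, ht, hsub⟩ := hU
  classical
  refine ⟨fun β => if β ∈ I then f β else 0, hsub fun α hα => ?_, ?_⟩
  · simpa [hα] using mem_of_mem_nhds (ht α)
  · show (Function.support fun β => if β ∈ I then f β else 0).Finite
    refine hIfin.subset fun β hβ => ?_
    by_contra h
    simp [h] at hβ

lemma Y_repr (φ : finSuppSubmodule →L[ℝ] ℝ) :
    ∃ I : Finset CantorCube, ∀ v : finSuppSubmodule,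
      φ v = ∑ α ∈ I, (v : BigProd) α * φ ⟨eBasis α, eBasis_mem α⟩ := by
  classical
  have h0 : {v : finSuppSubmodule | |φ v| < 1} ∈ 𝓝 (0 : finSuppSubmodule) := by
    have ht := φ.continuous.tendsto (0 : finSuppSubmodule)
    rw [map_zero] at ht
    have := ht (Metric.ball_mem_nhds (0 : ℝ) one_pos)
    refine Filter.mem_of_superset this fun v hv => ?_
    simpa [Real.dist_eq] using hv
  rw [nhds_subtype] at h0
  obtain ⟨U, hU, hUsub⟩ := (Filter.mem_comap).mp h0
  obtain ⟨I, ε, hεpos, hbox⟩ := exists_finset_box (by simpa using hU)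
  refine ⟨I, fun v => ?_⟩
  have hvan : ∀ u : finSuppSubmodule, (∀ α ∈ I, (u : BigProd) α = 0) → φ u = 0 := by
    intro u hu
    by_contra h
    have key : ∀ c : ℝ, |φ (c • u)| < 1 := by
      intro c
      refine hUsub ?_
      show ((c • u : finSuppSubmodule) : BigProd) ∈ U
      refine hbox _ fun α hα => ?_
      simp [hu α hα, hεpos.le]
    have h2 := key (2 / φ u)
    rw [map_smul, smul_eq_mul, abs_mul, abs_div] at h2
    have : |(2 : ℝ)| / |φ u| * |φ u| = 2 := by
      rw [div_mul_cancel₀]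
      · simp
      · simpa using h
    linarith [h2, this]
  set u : finSuppSubmodule :=
    v - ∑ α ∈ I, ((v : BigProd) α) • (⟨eBasis α, eBasis_mem α⟩ : finSuppSubmodule) with hu
  have hucoe : (u : BigProd) = (v : BigProd) - ∑ α ∈ I, ((v : BigProd) α) • eBasis α := by
    rw [hu]
    push_cast
    rfl
  have h1 : φ u = 0 := by
    refine hvan u fun β hβ => ?_
    rw [hucoe]
    simp only [Pi.sub_apply]
    rw [sum_eBasis_apply I _ hβ, sub_self]
  have h2 : φ u = φ v - ∑ α ∈ I, (v : BigProd) α * φ ⟨eBasis α, eBasis_mem α⟩ := by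
    rw [hu, map_sub, map_sum]
    congr 1
    exact Finset.sum_congr rfl fun α _ => by rw [map_smul, smul_eq_mul]
  rw [h1] at h2
  linarith [h2]

lemma part_iii_ros :
    ∀ y : ℕ → finSuppSubmodule, Bornology.IsVonNBounded ℝ (Set.range y) →
      ∃ ψ : ℕ → ℕ, StrictMono ψ ∧ IsWeakCauchy (y ∘ ψ) := by
  intro y hy
  classical
  set S : Set CantorCube := ⋃ n, Function.support ((y n : BigProd)) with hS
  have hScnt : S.Countable := Set.countable_iUnion fun n => ((y n).2).countable
  haveI := hScnt.to_subtype
  have hM : ∀ α : CantorCube, ∃ Mα : ℝ, ∀ n, |(y n : BigProd) α| ≤ Mα := by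
    intro α
    have him := hy.image
      ((ContinuousLinearMap.proj (R := ℝ) (φ := fun _ : CantorCube => ℝ) α).comp
        finSuppSubmodule.subtypeL)
    rw [NormedSpace.isVonNBounded_iff] at him
    obtain ⟨Mα, hMα⟩ := him.exists_norm_le
    exact ⟨Mα, fun n => hMα _ ⟨y n, Set.mem_range_self n, rfl⟩⟩
  choose M hMle using hM
  obtain ⟨ψ, hψ, w, hw⟩ := exists_subseq_tendsto_pointwise
    (fun n (s : ↥S) => (y n : BigProd) s.val) (fun s => M s.val) (fun n s => hMle s.val n)
  refine ⟨ψ, hψ, ?_⟩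
  set wext : BigProd := fun α => if h : α ∈ S then w ⟨α, h⟩ else 0 with hwext
  have hconv : ∀ α : CantorCube,
      Tendsto (fun n => (y (ψ n) : BigProd) α) atTop (𝓝 (wext α)) := by
    intro α
    by_cases h : α ∈ S
    · simpa [hwext, h] using hw ⟨α, h⟩
    · have hz : ∀ n, (y n : BigProd) α = 0 := by
        intro n
        by_contra hzz
        exact h (Set.mem_iUnion.mpr ⟨n, hzz⟩)
      have : (fun n => (y (ψ n) : BigProd) α) = fun _ => (0 : ℝ) := funext fun n => hz (ψ n)
      rw [this]
      simp only [hwext, dif_neg h]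
      exact tendsto_const_nhds
  intro φ
  obtain ⟨I, hI⟩ := Y_repr φ
  refine ⟨∑ α ∈ I, wext α * φ ⟨eBasis α, eBasis_mem α⟩, ?_⟩
  have hfe : (fun n => φ ((y ∘ ψ) n)) =
      fun n => ∑ α ∈ I, (y (ψ n) : BigProd) α * φ ⟨eBasis α, eBasis_mem α⟩ :=
    funext fun n => hI _
  rw [hfe]
  exact tendsto_finset_sum _ fun α _ => (hconv α).mul_const _

/-! ### Part (iv) -/

lemma part_iv : ¬ ∃ ψ : ℕ → ℕ, StrictMono ψ ∧ IsL1Seq (proj ∘ ψ) := by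
  rintro ⟨ψ, hψ, ρ, hρ, δ, hδ, hineq⟩
  classical
  have h0 : ρ ⁻¹' Set.Iio 1 ∈ 𝓝 (0 : BigProd) := by
    have ht := hρ.tendsto (0 : BigProd)
    rw [show ρ (0 : BigProd) = 0 from map_zero ρ] at ht
    exact ht (Iio_mem_nhds one_pos)
  obtain ⟨I, ε, hεpos, hbox⟩ := exists_finset_box h0
  have hvan : ∀ x : BigProd, (∀ α ∈ I, x α = 0) → ρ x = 0 := by
    intro x hx
    by_contra h
    have hpos : 0 < ρ x := lt_of_le_of_ne (apply_nonneg ρ x) (Ne.symm h)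
    have key : ρ ((2 / ρ x) • x) < 1 :=
      hbox _ fun α hα => by simp [hx α hα, hεpos.le]
    rw [map_smul_eq_mul] at key
    have : ‖(2 : ℝ) / ρ x‖ * ρ x = 2 := by
      rw [Real.norm_eq_abs, abs_of_pos (by positivity)]
      field_simp
    linarith
  obtain ⟨i, j, hij, heq⟩ :=
    Finite.exists_ne_map_eq_of_infinite fun k : ℕ => fun α : ↥I => (α : CantorCube) (ψ k)
  set x : BigProd := proj (ψ i) - proj (ψ j) with hx
  have hx0 : ρ x = 0 := by
    refine hvan _ fun α hα => ?_
    have hcoord : (α : CantorCube) (ψ i) = (α : CantorCube) (ψ j) := by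
      have := congrFun heq (⟨α, hα⟩ : ↥I)
      simpa using this
    simp [hx, proj, hcoord]
  set n : ℕ := max i j + 1 with hn
  have hi : i ∈ Finset.range n := Finset.mem_range.mpr (by omega)
  have hj : j ∈ Finset.range n := Finset.mem_range.mpr (by omega)
  set c : ℕ → ℝ := fun k => if k = i then 1 else if k = j then -1 else 0 with hc
  have habs : ∀ k, |c k| = (if k = i then (1 : ℝ) else 0) + (if k = j then 1 else 0) := by
    intro k
    by_cases h1 : k = i
    · subst h1
      simp [hc, hij]
    · by_cases h2 : k = j
      · subst h2
        simp [hc, h1]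
      · simp [hc, h1, h2]
  have hsum1 : ∑ k ∈ Finset.range n, |c k| = 2 := by
    simp only [habs]
    rw [Finset.sum_add_distrib, Finset.sum_ite_eq' (Finset.range n) i fun _ => (1 : ℝ),
      Finset.sum_ite_eq' (Finset.range n) j fun _ => (1 : ℝ)]
    simp only [hi, hj, if_pos]
    norm_num
  have hterm : ∀ k, c k • proj (ψ k) =
      (if k = i then proj (ψ i) else 0) + (if k = j then -proj (ψ j) else 0) := by
    intro k
    by_cases h1 : k = i
    · subst h1
      simp [hc, hij]
    · by_cases h2 : k = j
      · subst h2
        simp [hc, h1]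
      · simp [hc, h1, h2]
  have hsum2 : ∑ k ∈ Finset.range n, c k • proj (ψ k) = x := by
    simp only [hterm]
    rw [Finset.sum_add_distrib,
      Finset.sum_ite_eq' (Finset.range n) i fun _ => proj (ψ i),
      Finset.sum_ite_eq' (Finset.range n) j fun _ => -proj (ψ j)]
    simp only [hi, hj, if_pos]
    rw [hx, sub_eq_add_neg]
  have hfinal := hineq n c
  simp only [Function.comp_apply] at hfinal
  rw [hsum1, hsum2, hx0] at hfinal
  linarith

theorem product_space_tame_not_rosenthal :
    (∀ B : Set BigProd, Bornology.IsVonNBounded ℝ B → IsTameSubset B) ∧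
    (Bornology.IsVonNBounded ℝ (Set.range proj) ∧
      ¬ ∃ ψ : ℕ → ℕ, StrictMono ψ ∧ IsWeakCauchy (proj ∘ ψ)) ∧
    (Dense (finSuppSubmodule : Set BigProd) ∧
      ∀ y : ℕ → finSuppSubmodule, Bornology.IsVonNBounded ℝ (Set.range y) →
        ∃ ψ : ℕ → ℕ, StrictMono ψ ∧ IsWeakCauchy (y ∘ ψ)) ∧
    (¬ ∃ ψ : ℕ → ℕ, StrictMono ψ ∧ IsL1Seq (proj ∘ ψ)) :=
  ⟨part_i, ⟨part_ii_bdd, part_ii_nc⟩, ⟨part_iii_dense, part_iii_ros⟩, part_iv⟩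
end

section
/- Let E be a real locally convex space and let B ⊆ E be relatively weakly compact, i.e. the closure of B in the weak topology of E is weakly compact. Then B is a DLP subset of E: for every K ∈ eqc(E*), the family {φ ↦ φ(b) : b ∈ B} of functions on K has the double limit property. -/
open Filter Topology

/-- A bounded family of functions indexed by membership in `F` has the double limit
property when the two iterated limits agree whenever both exist. -/
def HasDLP {K : Type*} (F : Set (K → ℝ)) : Prop :=
  ∀ f : ℕ → K → ℝ, (∀ n, f n ∈ F) → ∀ x : ℕ → K,
    ∀ (l : ℕ → ℝ) (L₁ : ℝ),
      (∀ n, Tendsto (fun m => f n (x m)) atTop (𝓝 (l n))) →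
      Tendsto l atTop (𝓝 L₁) →
    ∀ (l' : ℕ → ℝ) (L₂ : ℝ),
      (∀ m, Tendsto (fun n => f n (x m)) atTop (𝓝 (l' m))) →
      Tendsto l' atTop (𝓝 L₂) →
    L₁ = L₂

variable {E : Type*} [AddCommGroup E] [Module ℝ E] [TopologicalSpace E]

/-- The identity map of `E` onto `E` with its weak topology. -/
def toWeakSp (x : E) : WeakSpace ℝ E := x


private lemma mcp_eq_limit {u : ℕ → ℝ} {c L : ℝ}
    (hc : MapClusterPt c atTop u) (hL : Tendsto u atTop (𝓝 L)) : c = L :=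
  eq_of_nhds_neBot (hc.clusterPt.mono hL)

/-- A relatively weakly compact subset `B` of a real locally convex
space is a DLP subset: for every equicontinuous, weak-star compact `K ⊆ E*`, the family
of evaluations of `B` on `K` has the double limit property. -/
theorem relatively_weakly_compact_is_DLP
    {E : Type*} [AddCommGroup E] [Module ℝ E] [TopologicalSpace E]
    [IsTopologicalAddGroup E] [ContinuousSMul ℝ E] [LocallyConvexSpace ℝ E]
    (B : Set E) (hB : IsCompact (closure (toWeakSp '' B))) :
    ∀ K : Set (WeakDual ℝ E), IsEquicontinuousSet K → IsCompact K →
      HasDLP (evalFamily B K) := by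
  intro K _ hKc f hf x l L₁ hl hL₁ l' L₂ hl' hL₂
  choose b hbB hfb using hf
  -- cluster point of (x m) in K
  have hxK : Filter.map (fun m => ((x m : WeakDual ℝ E))) atTop ≤ 𝓟 K := by
    rw [Filter.le_principal_iff, Filter.mem_map]
    exact Filter.Eventually.of_forall fun m => (x m).2
  obtain ⟨φ, hφK, hφ⟩ := hKc.exists_mapClusterPt hxK
  -- cluster point of (toWeakSp (b n)) in the weak closure of B
  have hbCl : Filter.map (fun n => toWeakSp (b n)) atTop ≤ 𝓟 (closure (toWeakSp '' B)) := by
    rw [Filter.le_principal_iff, Filter.mem_map]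
    exact Filter.Eventually.of_forall fun n =>
      subset_closure (Set.mem_image_of_mem _ (hbB n))
  obtain ⟨c, _, hc⟩ := hB.exists_mapClusterPt hbCl
  -- evaluations
  have hevalDual : ∀ y : E, Continuous fun ψ : WeakDual ℝ E => ψ y :=
    fun y => WeakDual.eval_continuous y
  have hevalSp : ∀ ψ : E →L[ℝ] ℝ, Continuous fun z : WeakSpace ℝ E => ψ z :=
    fun ψ => WeakBilin.eval_continuous (topDualPairing ℝ E).flip ψ
  -- l n = φ (b n)
  have hln : ∀ n, l n = φ (b n) := by
    intro n
    have h1 : MapClusterPt (φ (b n)) atTop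
        ((fun ψ : WeakDual ℝ E => ψ (b n)) ∘ fun m => (x m : WeakDual ℝ E)) :=
      hφ.continuousAt_comp (hevalDual (b n)).continuousAt
    have h2 : Tendsto (fun m => (x m : WeakDual ℝ E) (b n)) atTop (𝓝 (l n)) := by
      simpa [hfb n] using hl n
    exact (mcp_eq_limit h1 h2).symm
  -- l' m = (x m) c
  have hlm : ∀ m, l' m = (x m : WeakDual ℝ E) c := by
    intro m
    have h1 : MapClusterPt ((x m : WeakDual ℝ E) c) atTop
        ((fun z : WeakSpace ℝ E => (x m : WeakDual ℝ E) z) ∘ fun n => toWeakSp (b n)) :=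
      hc.continuousAt_comp (hevalSp (x m : WeakDual ℝ E)).continuousAt
    have h2 : Tendsto (fun n => (x m : WeakDual ℝ E) (b n)) atTop (𝓝 (l' m)) := by
      simpa [hfb] using hl' m
    exact (mcp_eq_limit h1 h2).symm
  -- L₁ = φ c
  have hc1 : MapClusterPt ((φ : WeakDual ℝ E) c) atTop
      ((fun z : WeakSpace ℝ E => (φ : WeakDual ℝ E) z) ∘ fun n => toWeakSp (b n)) :=
    hc.continuousAt_comp (hevalSp (φ : WeakDual ℝ E)).continuousAt
  have hL1 : (φ : WeakDual ℝ E) c = L₁ := by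
    refine mcp_eq_limit hc1 ?_
    have : Tendsto (fun n => φ (b n)) atTop (𝓝 L₁) := by
      refine hL₁.congr fun n => hln n
    exact this
  -- L₂ = φ c
  have hc2 : MapClusterPt ((φ : WeakDual ℝ E) c) atTop
      ((fun ψ : WeakDual ℝ E => ψ c) ∘ fun m => (x m : WeakDual ℝ E)) :=
    hφ.continuousAt_comp (hevalDual c).continuousAt
  have hL2 : (φ : WeakDual ℝ E) c = L₂ := by
    refine mcp_eq_limit hc2 ?_
    exact hL₂.congr fun m => hlm m
  rw [← hL1, ← hL2]
end
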